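/- Let k be a commutative ring, let M be a ℤ-graded k-module with decomposition M = ⨁_{e∈ℤ} M_e, and fix d ∈ ℤ. For n ≥ 0, let Pⁿ := M ⊗_k k[t₁^{±1}, …, tₙ^{±1}], the direct sum over pairs (e, (k₁,…,kₙ)) ∈ ℤ × ℤⁿ of copies of M_e, writing the element of M_e in position (k₁,…,kₙ) as b·t₁^{k₁}⋯tₙ^{kₙ}. Define k-linear maps ∂ⁿ : Pⁿ → Pⁿ⁺¹ by, for b ∈ M_e: ∂ⁿ(b·t₁^{k₁}⋯tₙ^{kₙ}) = b·t₁^{k₁}⋯tₙ^{kₙ}·t_{n+1}^{e−d} + Σ_{i=1}^{n} (−1)ⁱ · b·t₁^{k₁}⋯t_{n−i}^{k_{n−i}}·(t_{n+1−i}t_{n+2−i})^{k_{n+1−i}}·t_{n+3−i}^{k_{n+2−i}}⋯t_{n+1}^{kₙ} + (−1)^{n+1} · b·t₂^{k₁}⋯t_{n+1}^{kₙ}. Then ∂ⁿ⁺¹ ∘ ∂ⁿ = 0, and the resulting cochain complex P⁰ → P¹ → P² → ⋯ has cohomology H⁰ ≅ M_d and Hⁿ = 0 for all n ≥ 1. 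-/

import Mathlib

open DirectSum



/-- The `n`-th term `Pⁿ = M ⊗ k[t₁^{±1},…,tₙ^{±1}]` of the twisted cochain complex: the direct
sum over pairs `(e, (k₁,…,kₙ)) ∈ ℤ × ℤⁿ` of copies of `M_e`; the element of `M_e` in position
`κ = (k₁,…,kₙ)` is thought of as `b·t₁^{k₁}⋯tₙ^{kₙ}`. -/
abbrev TwistedCochain (k : Type) [CommRing k] (M : ℤ → Type)
    [∀ e, AddCommGroup (M e)] [∀ e, Module k (M e)] (n : ℕ) : Type :=
  ⨁ (p : ℤ × (Fin n → ℤ)), M p.1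

/-- The differential `∂ⁿ : Pⁿ → Pⁿ⁺¹` of the twisted cochain complex: on `b·t₁^{k₁}⋯tₙ^{kₙ}`
with `b ∈ M_e` it is the alternating sum of
 * `b·t₁^{k₁}⋯tₙ^{kₙ}·t_{n+1}^{e−d}` (appending the exponent `e − d`),
 * for `i = 1,…,n`, with sign `(−1)ⁱ`, the monomial obtained by duplicating the exponent at
   (1-indexed) position `n+1−i` (here realized as precomposition with `Fin.predAbove m` for
   the 0-indexed duplication position `m = n−i`, with sign `(−1)^{n−m}`), and
 * with sign `(−1)^{n+1}`, the shift `b·t₂^{k₁}⋯t_{n+1}^{kₙ}` (exponent `0` in position 1). -/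
noncomputable def twistedDifferential (k : Type) [CommRing k] (M : ℤ → Type)
    [∀ e, AddCommGroup (M e)] [∀ e, Module k (M e)] (d : ℤ) (n : ℕ) :
    TwistedCochain k M n →ₗ[k] TwistedCochain k M (n + 1) :=
  DirectSum.toModule k (ℤ × (Fin n → ℤ)) (TwistedCochain k M (n + 1)) fun p =>
    (DirectSum.lof k (ℤ × (Fin (n + 1) → ℤ)) (fun q => M q.1)
        (p.1, Fin.snoc p.2 (p.1 - d)))
      + (∑ m : Fin n, ((-1 : ℤ) ^ (n - (m : ℕ))) •
          DirectSum.lof k (ℤ × (Fin (n + 1) → ℤ)) (fun q => M q.1)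
            (p.1, fun j => p.2 (m.predAbove j)))
      + ((-1 : ℤ) ^ (n + 1)) •
          DirectSum.lof k (ℤ × (Fin (n + 1) → ℤ)) (fun q => M q.1)
            (p.1, Fin.cons 0 p.2)


namespace TwistedAux

def ext (d e : ℤ) {n : ℕ} (κ : Fin n → ℤ) (m : ℕ) : ℤ :=
  if h : 1 ≤ m ∧ m ≤ n then κ ⟨m - 1, by omega⟩ else if m = 0 then 0 else e - d

def dlt (d e : ℤ) {n : ℕ} (i : Fin (n + 2)) (κ : Fin n → ℤ) : Fin (n + 1) → ℤ :=
  fun j => if (j : ℕ) < (i : ℕ) then ext d e κ ((j : ℕ) + 1) else ext d e κ (j : ℕ)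


lemma ext_dlt (d e : ℤ) {n : ℕ} (b : Fin (n + 2)) (κ : Fin n → ℤ) (m : ℕ) :
    ext d e (dlt d e b κ) m = ext d e κ (if m ≤ (b : ℕ) then m else m - 1) := by
  have hb := b.isLt
  rcases Nat.eq_zero_or_pos m with rfl | hm
  · simp [ext]
  by_cases hle : m ≤ n + 1
  · have : ext d e (dlt d e b κ) m = dlt d e b κ ⟨m - 1, by omega⟩ := by
      rw [ext, dif_pos ⟨hm, hle⟩]
    rw [this, dlt]
    simp only []
    split_ifs with h1 h2 h2 <;> (try (congr 1)) <;> omega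
  · rw [ext, dif_neg (by omega), if_neg (by omega)]
    rw [ext]
    split_ifs with h1 h2 h3 <;> first | rfl | omega

lemma dlt_comp (d e : ℤ) {n : ℕ} (a : Fin (n + 3)) (b : Fin (n + 2)) (κ : Fin n → ℤ)
    (hba : (b : ℕ) < (a : ℕ)) :
    dlt d e a (dlt d e b κ) =
      dlt d e (⟨(b : ℕ), by omega⟩ : Fin (n + 3))
        (dlt d e (⟨(a : ℕ) - 1, by have := a.isLt; omega⟩ : Fin (n + 2)) κ) := by
  funext j
  have hj := j.isLt
  simp only [dlt, ext_dlt]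
  split_ifs <;> (try (congr 1)) <;> omega



lemma dlt_zero (d e : ℤ) {n : ℕ} (κ : Fin n → ℤ) :
    dlt d e (0 : Fin (n + 2)) κ = Fin.cons 0 κ := by
  funext j
  have hj := j.isLt
  rw [dlt, if_neg (by simp)]
  rcases Nat.eq_zero_or_pos (j : ℕ) with h0 | h0
  · have : j = 0 := Fin.ext h0
    subst this
    simp [ext]
  · have : j = Fin.succ ⟨(j : ℕ) - 1, by omega⟩ := Fin.ext (by simp <;> omega)
    rw [this, Fin.cons_succ, ext, dif_pos ⟨by simp <;> omega, by simp <;> omega⟩]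
    first
    | rfl
    | (congr 1 <;> simp [Fin.ext_iff, Fin.last] <;> omega)

lemma dlt_last (d e : ℤ) {n : ℕ} (κ : Fin n → ℤ) :
    dlt d e (Fin.last (n + 1)) κ = Fin.snoc κ (e - d) := by
  funext j
  have hj := j.isLt
  rw [dlt, if_pos (by simp [Fin.last] <;> omega)]
  rcases Nat.lt_or_ge (j : ℕ) n with h | h
  · have : j = Fin.castSucc ⟨(j : ℕ), h⟩ := Fin.ext (by simp)
    rw [this, Fin.snoc_castSucc, ext, dif_pos ⟨by omega, by simp <;> omega⟩]
    first
    | rfl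
    | (congr 1 <;> simp [Fin.ext_iff, Fin.last] <;> omega)
  · have : j = Fin.last n := Fin.ext (by simp <;> omega)
    subst this
    rw [Fin.snoc_last, ext, dif_neg (by simp), if_neg (by simp)]

lemma dlt_mid (d e : ℤ) {n : ℕ} (m : Fin n) (κ : Fin n → ℤ) :
    dlt d e (Fin.succ (Fin.castSucc m)) κ = fun j => κ (m.predAbove j) := by
  funext j
  have hj := j.isLt
  have hm := m.isLt
  rw [dlt]
  rcases Nat.lt_or_ge (j : ℕ) ((m : ℕ) + 1) with h | h
  · rw [if_pos (by simpa using h), ext, dif_pos ⟨by omega, by omega⟩]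
    rw [Fin.predAbove, dif_neg (by simp [Fin.lt_def]; omega)]
    first
    | rfl
    | (congr 1 <;> simp [Fin.ext_iff, Fin.last] <;> omega)
  · rw [if_neg (by simp <;> omega), ext, dif_pos ⟨by omega, by omega⟩]
    rw [Fin.predAbove, dif_pos (by simp [Fin.lt_def]; omega)]
    first
    | rfl
    | (congr 1 <;> simp [Fin.ext_iff, Fin.last] <;> omega)

lemma ext_init (d e : ℤ) {n : ℕ} (κ : Fin (n + 1) → ℤ) (hc : κ (Fin.last n) = e - d) (m : ℕ) :
    ext d e (Fin.init κ) m = ext d e κ m := by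
  by_cases h : 1 ≤ m ∧ m ≤ n
  · rw [ext, dif_pos h, ext, dif_pos ⟨h.1, by omega⟩, Fin.init]
    first
    | rfl
    | (congr 1 <;> simp [Fin.ext_iff, Fin.last] <;> omega)
  · by_cases hm : m = 0
    · simp [ext, hm]
    · by_cases hm1 : m = n + 1
      · subst hm1
        rw [ext, dif_neg h, if_neg hm, ext, dif_pos ⟨by omega, le_refl _⟩, ← hc]
        first
        | rfl
        | (congr 1 <;> simp [Fin.ext_iff, Fin.last] <;> omega)
      · rw [ext, dif_neg h, if_neg hm, ext, dif_neg (by omega), if_neg hm]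

lemma dlt_last_entry (d e : ℤ) {n : ℕ} (i : Fin (n + 3)) (κ : Fin (n + 1) → ℤ) :
    dlt d e i κ (Fin.last (n + 1)) =
      if (i : ℕ) = n + 2 then e - d else κ (Fin.last n) := by
  have hi := i.isLt
  rw [dlt]
  by_cases h : (i : ℕ) = n + 2
  · rw [if_pos h, if_pos (by simp [h]), ext, dif_neg (by simp), if_neg (by simp)]
  · have h' : (i : ℕ) ≤ n + 1 := by omega
    rw [if_neg h, if_neg (by simp only [Fin.val_last]; omega), ext,
      dif_pos ⟨by simp, by simp⟩]
    first
    | rfl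
    | (congr 1 <;> simp [Fin.ext_iff, Fin.last] <;> omega)

lemma init_dlt (d e : ℤ) {n : ℕ} (i : Fin (n + 2)) (κ : Fin (n + 1) → ℤ)
    (hc : κ (Fin.last n) = e - d) :
    Fin.init (dlt d e (Fin.castSucc i) κ) = dlt d e i (Fin.init κ) := by
  funext j
  rw [Fin.init, dlt, dlt]
  simp only [Fin.coe_castSucc]
  rw [ext_init d e κ hc, ext_init d e κ hc]

lemma init_dlt_last (d e : ℤ) {n : ℕ} (κ : Fin (n + 1) → ℤ) :
    Fin.init (dlt d e (Fin.last (n + 2)) κ) = κ := by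
  funext j
  have hj := j.isLt
  rw [Fin.init, dlt, if_pos (by simp [Fin.last] <;> omega), ext,
    dif_pos ⟨by omega, by simp <;> omega⟩]
  first
  | rfl
  | (congr 1 <;> simp [Fin.ext_iff, Fin.last] <;> omega)



variable (k : Type) [CommRing k] (M : ℤ → Type)
    [∀ e, AddCommGroup (M e)] [∀ e, Module k (M e)] (d : ℤ)

lemma diff_lof (n : ℕ) (p : ℤ × (Fin n → ℤ)) (b : M p.1) :
    twistedDifferential k M d n (DirectSum.lof k _ (fun q => M q.1) p b) =
      ∑ i : Fin (n + 2), ((-1 : ℤ) ^ (n + 1 - (i : ℕ))) •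
        DirectSum.lof k (ℤ × (Fin (n + 1) → ℤ)) (fun q => M q.1) (p.1, dlt d p.1 i p.2) b := by
  rw [twistedDifferential, DirectSum.toModule_lof]
  rw [Fin.sum_univ_succ, Fin.sum_univ_castSucc]
  simp only [LinearMap.add_apply, LinearMap.sum_apply, LinearMap.smul_apply]
  rw [dlt_zero]
  have hlast : (Fin.last n).succ = Fin.last (n + 1) := by
    simp [Fin.ext_iff]
  rw [hlast, dlt_last]
  have h1 : ∀ m : Fin n, dlt d p.1 ((Fin.castSucc m).succ) p.2 = fun j => p.2 (m.predAbove j) :=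
    fun m => dlt_mid d p.1 m p.2
  have h2 : ∀ m : Fin n, n + 1 - ((Fin.castSucc m).succ : ℕ) = n - (m : ℕ) := by
    intro m
    simp
  have h0 : n + 1 - ((0 : Fin (n + 2)) : ℕ) = n + 1 := by simp
  have h3 : n + 1 - ((Fin.last (n + 1)) : ℕ) = 0 := by simp
  rw [h0, h3]
  simp only [pow_zero, one_smul]
  erw [LinearMap.sum_apply]
  simp only [LinearMap.smul_apply]
  conv_rhs => rw [Finset.sum_congr rfl (fun m _ => by rw [h1 m, h2 m] :
    ∀ m ∈ Finset.univ, ((-1 : ℤ) ^ (n + 1 - ((Fin.castSucc m).succ : ℕ))) •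
      DirectSum.lof k (ℤ × (Fin (n + 1) → ℤ)) (fun q => M q.1)
        (p.1, dlt d p.1 ((Fin.castSucc m).succ) p.2) b
      = ((-1 : ℤ) ^ (n - (m : ℕ))) • DirectSum.lof k (ℤ × (Fin (n + 1) → ℤ))
          (fun q => M q.1) (p.1, fun j => p.2 (m.predAbove j)) b)]
  abel


lemma comp_zero (n : ℕ) :
    (twistedDifferential k M d (n + 1)).comp (twistedDifferential k M d n) = 0 := by
  refine DirectSum.linearMap_ext (R := k) (M := fun (p : ℤ × (Fin n → ℤ)) => M p.1)
    fun p => LinearMap.ext fun b => ?_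
  simp only [LinearMap.comp_apply, LinearMap.zero_apply]
  rw [diff_lof, map_sum]
  have hsmul : ∀ (z : ℤ) (x : TwistedCochain k M (n + 1)),
      twistedDifferential k M d (n + 1) (z • x) = z • twistedDifferential k M d (n + 1) x :=
    fun z x => map_zsmul _ z x
  simp only [hsmul, diff_lof, Finset.smul_sum, smul_smul]
  rw [← Finset.sum_product']
  refine Finset.sum_involution
    (fun q _ =>
      if h : (q.1 : ℕ) < (q.2 : ℕ) then
        ((⟨(q.2 : ℕ) - 1, by have := q.2.isLt; omega⟩ : Fin (n + 2)),
         (⟨(q.1 : ℕ), by have := q.1.isLt; omega⟩ : Fin (n + 3)))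
      else
        ((⟨(q.2 : ℕ), by have := q.1.isLt; omega⟩ : Fin (n + 2)),
         (⟨(q.1 : ℕ) + 1, by have := q.1.isLt; omega⟩ : Fin (n + 3))))
    (fun q hq => ?_) (fun q hq _ => ?_) (fun q hq => by simp) (fun q hq => ?_)
  · have h1 := q.1.isLt
    have h2 := q.2.isLt
    by_cases h : (q.1 : ℕ) < (q.2 : ℕ)
    · rw [dif_pos h]
      dsimp only
      rw [dlt_comp d p.1 q.2 q.1 p.2 h, ← add_smul,
        show ((-1 : ℤ) ^ (n + 1 - (q.1 : ℕ)) * (-1) ^ (n + 1 + 1 - (q.2 : ℕ))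
            + (-1 : ℤ) ^ (n + 1 - ((q.2 : ℕ) - 1)) * (-1) ^ (n + 1 + 1 - (q.1 : ℕ))) = 0 from by
          rw [show n + 1 - ((q.2 : ℕ) - 1) = n + 1 + 1 - (q.2 : ℕ) from by omega,
            show n + 1 + 1 - (q.1 : ℕ) = (n + 1 - (q.1 : ℕ)) + 1 from by omega, pow_succ]
          ring,
        zero_smul]
    · rw [dif_neg h]
      dsimp only
      have hc := dlt_comp d p.1 (⟨(q.1 : ℕ) + 1, by omega⟩ : Fin (n + 3))
        (⟨(q.2 : ℕ), by omega⟩ : Fin (n + 2)) p.2 (by simp; omega)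
      simp only [show (q.1 : ℕ) + 1 - 1 = (q.1 : ℕ) from by omega, Fin.eta] at hc
      rw [hc, ← add_smul,
        show ((-1 : ℤ) ^ (n + 1 - (q.1 : ℕ)) * (-1) ^ (n + 1 + 1 - (q.2 : ℕ))
            + (-1 : ℤ) ^ (n + 1 - (q.2 : ℕ)) * (-1) ^ (n + 1 + 1 - ((q.1 : ℕ) + 1))) = 0 from by
          rw [show n + 1 + 1 - ((q.1 : ℕ) + 1) = n + 1 - (q.1 : ℕ) from by omega,
            show n + 1 + 1 - (q.2 : ℕ) = (n + 1 - (q.2 : ℕ)) + 1 from by omega, pow_succ]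
          ring,
        zero_smul]
  · by_cases h : (q.1 : ℕ) < (q.2 : ℕ)
    · intro He
      rw [dif_pos h] at He
      have := congrArg (fun r => ((r.2 : Fin (n + 3)) : ℕ)) He
      dsimp only at this
      omega
    · intro He
      rw [dif_neg h] at He
      have := congrArg (fun r => ((r.2 : Fin (n + 3)) : ℕ)) He
      dsimp only at this
      omega
  · have h1 := q.1.isLt
    have h2 := q.2.isLt
    by_cases h : (q.1 : ℕ) < (q.2 : ℕ)
    · rw [dif_pos h]
      dsimp only
      rw [dif_neg (show ¬((q.2 : ℕ) - 1 < (q.1 : ℕ)) from by omega)]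
      refine Prod.ext (Fin.ext ?_) (Fin.ext ?_) <;> dsimp only <;> omega
    · rw [dif_neg h]
      dsimp only
      rw [dif_pos (show (q.2 : ℕ) < (q.1 : ℕ) + 1 from by omega)]
      refine Prod.ext (Fin.ext ?_) (Fin.ext ?_) <;> dsimp only <;> omega


/-- The contracting homotopy. -/
noncomputable def hmt (n : ℕ) : TwistedCochain k M (n + 1) →ₗ[k] TwistedCochain k M n :=
  DirectSum.toModule k (ℤ × (Fin (n + 1) → ℤ)) (TwistedCochain k M n) fun p =>
    if p.2 (Fin.last n) = p.1 - d then
      DirectSum.lof k (ℤ × (Fin n → ℤ)) (fun q => M q.1) (p.1, Fin.init p.2) else 0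

lemma hmt_lof (n : ℕ) (p : ℤ × (Fin (n + 1) → ℤ)) (b : M p.1) :
    hmt k M d n (DirectSum.lof k (ℤ × (Fin (n + 1) → ℤ)) (fun q => M q.1) p b) =
      if p.2 (Fin.last n) = p.1 - d then
        DirectSum.lof k (ℤ × (Fin n → ℤ)) (fun q => M q.1) (p.1, Fin.init p.2) b else 0 := by
  rw [hmt, DirectSum.toModule_lof]
  by_cases h : p.2 (Fin.last n) = p.1 - d <;> simp [h]

lemma homotopy (n : ℕ) :
    (hmt k M d (n + 1)).comp (twistedDifferential k M d (n + 1))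
      + (twistedDifferential k M d n).comp (hmt k M d n) = LinearMap.id := by
  refine DirectSum.linearMap_ext (R := k) (M := fun (p : ℤ × (Fin (n + 1) → ℤ)) => M p.1)
    fun p => LinearMap.ext fun b => ?_
  simp only [LinearMap.add_apply, LinearMap.comp_apply, LinearMap.id_apply]
  rw [diff_lof, map_sum, hmt_lof]
  have hs : ∀ (z : ℤ) (y : TwistedCochain k M (n + 2)),
      hmt k M d (n + 1) (z • y) = z • hmt k M d (n + 1) y := fun z y => map_zsmul _ z y
  simp only [hs, hmt_lof]
  rw [Fin.sum_univ_castSucc]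
  have hlt : dlt d p.1 (Fin.last (n + 2)) p.2 (Fin.last (n + 1)) = p.1 - d := by
    rw [dlt_last_entry]; simp
  rw [if_pos hlt, init_dlt_last,
    show n + 1 + 1 - ((Fin.last (n + 2) : Fin (n + 3)) : ℕ) = 0 from by simp, pow_zero, one_smul]
  by_cases hc : p.2 (Fin.last n) = p.1 - d
  · rw [if_pos hc, diff_lof]
    conv_lhs =>
      rw [Finset.sum_congr rfl (fun j (_ : j ∈ Finset.univ) =>
        show ((-1 : ℤ) ^ (n + 1 + 1 - ((Fin.castSucc j : Fin (n + 3)) : ℕ))) •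
          (if dlt d p.1 (Fin.castSucc j) p.2 (Fin.last (n + 1)) = p.1 - d then
            DirectSum.lof k (ℤ × (Fin (n + 1) → ℤ)) (fun q => M q.1)
              (p.1, Fin.init (dlt d p.1 (Fin.castSucc j) p.2)) b else 0)
          = -(((-1 : ℤ) ^ (n + 1 - (j : ℕ))) •
              DirectSum.lof k (ℤ × (Fin (n + 1) → ℤ)) (fun q => M q.1)
                (p.1, dlt d p.1 j (Fin.init p.2)) b) from by
        rw [dlt_last_entry, show ((Fin.castSucc j : Fin (n + 3)) : ℕ) = (j : ℕ) from rfl,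
          if_neg (show ¬((j : ℕ) = n + 2) from by have := j.isLt; omega), if_pos hc,
          init_dlt d p.1 j p.2 hc,
          show n + 1 + 1 - (j : ℕ) = (n + 1 - (j : ℕ)) + 1 from by
            have := j.isLt
            omega,
          pow_succ, mul_neg_one, neg_smul])]
    rw [Finset.sum_neg_distrib]
    abel
  · rw [if_neg hc, map_zero]
    conv_lhs =>
      rw [Finset.sum_congr rfl (fun j (_ : j ∈ Finset.univ) =>
        show ((-1 : ℤ) ^ (n + 1 + 1 - ((Fin.castSucc j : Fin (n + 3)) : ℕ))) •
          (if dlt d p.1 (Fin.castSucc j) p.2 (Fin.last (n + 1)) = p.1 - d then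
            DirectSum.lof k (ℤ × (Fin (n + 1) → ℤ)) (fun q => M q.1)
              (p.1, Fin.init (dlt d p.1 (Fin.castSucc j) p.2)) b else 0)
          = 0 from by
        rw [dlt_last_entry, show ((Fin.castSucc j : Fin (n + 3)) : ℕ) = (j : ℕ) from rfl,
          if_neg (show ¬((j : ℕ) = n + 2) from by have := j.isLt; omega), if_neg hc,
          smul_zero])]
    simp

/-- The unique map `Fin 0 → ℤ`. -/
def f0 : Fin 0 → ℤ := fun i => i.elim0

lemma diff_lof_d (b : M d) :
    twistedDifferential k M d 0
      (DirectSum.lof k (ℤ × (Fin 0 → ℤ)) (fun q => M q.1) ((d, f0) : ℤ × (Fin 0 → ℤ)) b) = 0 := by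
  rw [diff_lof]
  have hdd : dlt d d (Fin.succ (0 : Fin 1)) f0 = dlt d d (0 : Fin (0 + 2)) f0 := by
    funext j
    have hj := j.isLt
    rw [dlt, dlt]
    have hj0 : (j : ℕ) = 0 := by omega
    rw [if_pos (by simp [hj0]), if_neg (by simp [hj0]), hj0]
    rw [ext, dif_neg (by omega), if_neg (by omega), ext, dif_neg (by omega), if_pos rfl]
    ring
  rw [Fin.sum_univ_succ, Fin.sum_univ_succ, Fin.sum_univ_zero, hdd]
  simp only [Fin.val_zero, Fin.val_succ, Nat.zero_add]
  norm_num

lemma eval_diff0 (e : ℤ) (he : e ≠ d) (x : TwistedCochain k M 0) :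
    DirectSum.component k (ℤ × (Fin 1 → ℤ)) (fun q => M q.1)
        ((e, fun _ => e - d) : ℤ × (Fin 1 → ℤ)) (twistedDifferential k M d 0 x)
      = DirectSum.component k (ℤ × (Fin 0 → ℤ)) (fun q => M q.1)
          ((e, f0) : ℤ × (Fin 0 → ℤ)) x := by
  have hlin : (DirectSum.component k (ℤ × (Fin 1 → ℤ)) (fun q => M q.1)
        ((e, fun _ => e - d) : ℤ × (Fin 1 → ℤ))).comp (twistedDifferential k M d 0)
      = DirectSum.component k (ℤ × (Fin 0 → ℤ)) (fun q => M q.1) ((e, f0) : ℤ × (Fin 0 → ℤ)) := by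
    refine DirectSum.linearMap_ext (R := k) (M := fun (p : ℤ × (Fin 0 → ℤ)) => M p.1)
      fun p => LinearMap.ext fun b => ?_
    obtain ⟨pe, pf⟩ := p
    have hpf : pf = f0 := funext fun i => i.elim0
    subst hpf
    simp only [LinearMap.comp_apply]
    rw [diff_lof]
    rw [Fin.sum_univ_succ, Fin.sum_univ_succ, Fin.sum_univ_zero]
    simp only [Fin.val_zero, Fin.val_succ, Nat.zero_add]
    rw [map_add, map_add, map_zero, map_zsmul, map_zsmul]
    by_cases hpe : pe = e
    · subst hpe
      have h1 : dlt d pe (Fin.succ (0 : Fin 1)) f0 = (fun _ : Fin 1 => pe - d) := by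
        funext j
        have hj0 : (j : ℕ) = 0 := by have := j.isLt; omega
        rw [dlt, if_pos (by simp [hj0]), hj0, ext, dif_neg (by omega), if_neg (by omega)]
      rw [h1, DirectSum.component.lof_self]
      have h0 : DirectSum.component k (ℤ × (Fin 1 → ℤ)) (fun q => M q.1)
          ((pe, fun _ => pe - d) : ℤ × (Fin 1 → ℤ))
          (DirectSum.lof k (ℤ × (Fin 1 → ℤ)) (fun q => M q.1)
            ((pe, dlt d pe (0 : Fin (0 + 2)) f0) : ℤ × (Fin 1 → ℤ)) b) = 0 := by
        rw [DirectSum.component.of, dif_neg]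
        intro hco
        have h2 := congrArg (fun r => r.2 (0 : Fin 1)) hco
        simp only [dlt, ext] at h2
        rw [if_neg (by simp)] at h2
        simp at h2
        exact he (by omega)
      rw [h0, DirectSum.component.lof_self]
      simp
    · have hz1 : DirectSum.component k (ℤ × (Fin 1 → ℤ)) (fun q => M q.1)
          ((e, fun _ => e - d) : ℤ × (Fin 1 → ℤ))
          (DirectSum.lof k (ℤ × (Fin 1 → ℤ)) (fun q => M q.1)
            ((pe, dlt d pe (0 : Fin (0 + 2)) f0) : ℤ × (Fin 1 → ℤ)) b) = 0 := by
        rw [DirectSum.component.of, dif_neg]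
        intro hco
        exact hpe (congrArg Prod.fst hco)
      have hz2 : DirectSum.component k (ℤ × (Fin 1 → ℤ)) (fun q => M q.1)
          ((e, fun _ => e - d) : ℤ × (Fin 1 → ℤ))
          (DirectSum.lof k (ℤ × (Fin 1 → ℤ)) (fun q => M q.1)
            ((pe, dlt d pe (Fin.succ (0 : Fin 1)) f0) : ℤ × (Fin 1 → ℤ)) b) = 0 := by
        rw [DirectSum.component.of, dif_neg]
        intro hco
        exact hpe (congrArg Prod.fst hco)
      have hz3 : DirectSum.component k (ℤ × (Fin 0 → ℤ)) (fun q => M q.1)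
          ((e, f0) : ℤ × (Fin 0 → ℤ))
          (DirectSum.lof k (ℤ × (Fin 0 → ℤ)) (fun q => M q.1)
            ((pe, f0) : ℤ × (Fin 0 → ℤ)) b) = 0 := by
        rw [DirectSum.component.of, dif_neg]
        intro hco
        exact hpe (congrArg Prod.fst hco)
      rw [hz1, hz2, hz3]
      simp
  exact DFunLike.congr_fun hlin x

lemma ker_diff0 (x : TwistedCochain k M 0) (hx : twistedDifferential k M d 0 x = 0) :
    DirectSum.lof k (ℤ × (Fin 0 → ℤ)) (fun q => M q.1) ((d, f0) : ℤ × (Fin 0 → ℤ))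
      (DirectSum.component k (ℤ × (Fin 0 → ℤ)) (fun q => M q.1) ((d, f0) : ℤ × (Fin 0 → ℤ)) x)
      = x := by
  refine DirectSum.ext_component k fun q => ?_
  obtain ⟨qe, qf⟩ := q
  have hqf : qf = f0 := funext fun i => i.elim0
  subst hqf
  by_cases hqe : qe = d
  · subst hqe
    rw [DirectSum.component.lof_self]
  · rw [DirectSum.component.of, dif_neg (fun hco => hqe (congrArg Prod.fst hco).symm)]
    have := eval_diff0 k M d qe hqe x
    rw [hx, map_zero] at this
    exact this

end TwistedAux

open TwistedAux in
theorem twistedCochain_cohomology (k : Type) [CommRing k] (M : ℤ → Type)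
    [∀ e, AddCommGroup (M e)] [∀ e, Module k (M e)] (d : ℤ) :
    (∀ n : ℕ, (twistedDifferential k M d (n + 1)).comp (twistedDifferential k M d n) = 0) ∧
    Nonempty ((LinearMap.ker (twistedDifferential k M d 0)) ≃ₗ[k] M d) ∧
    (∀ n : ℕ, LinearMap.ker (twistedDifferential k M d (n + 1))
      = LinearMap.range (twistedDifferential k M d n)) := by
  refine ⟨comp_zero k M d, ⟨LinearEquiv.ofLinear
    ((DirectSum.component k (ℤ × (Fin 0 → ℤ)) (fun q => M q.1) ((d, f0) : ℤ × (Fin 0 → ℤ))).comp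
      (LinearMap.ker (twistedDifferential k M d 0)).subtype)
    (LinearMap.codRestrict (LinearMap.ker (twistedDifferential k M d 0))
      (DirectSum.lof k (ℤ × (Fin 0 → ℤ)) (fun q => M q.1) ((d, f0) : ℤ × (Fin 0 → ℤ)))
      (fun b => by rw [LinearMap.mem_ker]; exact diff_lof_d k M d b))
    ?_ ?_⟩, fun n => ?_⟩
  · refine LinearMap.ext fun b => ?_
    simp only [LinearMap.comp_apply, LinearMap.id_apply, LinearMap.codRestrict_apply,
      Submodule.subtype_apply]
    exact DirectSum.component.lof_self (R := k) (ι := ℤ × (Fin 0 → ℤ))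
      (M := fun q => M q.1) ((d, f0) : ℤ × (Fin 0 → ℤ)) b
  · refine LinearMap.ext fun x => Subtype.ext ?_
    simp only [LinearMap.comp_apply, LinearMap.id_apply, LinearMap.codRestrict_apply,
      Submodule.subtype_apply]
    exact ker_diff0 k M d x.1 x.2
  · refine le_antisymm (fun x hx => ?_) ?_
    · have hx' : twistedDifferential k M d (n + 1) x = 0 := hx
      have hid := DFunLike.congr_fun (homotopy k M d n) x
      simp only [LinearMap.add_apply, LinearMap.comp_apply, LinearMap.id_apply, hx',
        map_zero, zero_add] at hid
      exact ⟨hmt k M d n x, hid⟩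
    · rintro _ ⟨y, rfl⟩
      have := DFunLike.congr_fun (comp_zero k M d n) y
      simpa [LinearMap.mem_ker] using this
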